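/- If α and β are finite open covers of X and α refines β, then for every x and every monotone unbounded f, K^f(x,T,β) ≤ K^f(x,T,α), where K^f(x,T,γ) = limsup_n min_{ω ∈ φ_γ(x)} AIC_U(ω^n)/f(n). -/

import Mathlib

open Filter Set ENNReal
open Topology

/-- Kolmogorov complexity of a natural number (code of a string over a finite alphabet)
w.r.t. a machine `U`. -/
noncomputable def kol (U : List Bool →. ℕ) (x : ℕ) : ℕ∞ :=
  sInf {n : ℕ∞ | ∃ p : List Bool, (p.length : ℕ∞) = n ∧ x ∈ U p}

/-- The set `φ_β(x)` of symbolic orbits of `x` w.r.t. the open cover `β`. -/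
def phi {X : Type*} (T : X → X) {N : ℕ} (β : Fin N → Set X) (x : X) : Set (ℕ → Fin N) :=
  {ω | ∀ n : ℕ, T^[n] x ∈ β (ω n)}

/-- `min_{ω ∈ φ_β(x)} AIC_U(ω^n)`. -/
noncomputable def minAIC (U : List Bool →. ℕ) {X : Type*} (T : X → X) {N : ℕ}
    (β : Fin N → Set X) (x : X) (n : ℕ) : ℕ∞ :=
  ⨅ (ω : ℕ → Fin N) (_ : ω ∈ phi T β x),
    kol U (Encodable.encode (List.ofFn fun i : Fin n => ω i))

/-- `K^f(x,T,β) = limsup_n min_{ω ∈ φ_β(x)} AIC_U(ω^n)/f(n)`. -/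
noncomputable def KfCov (U : List Bool →. ℕ) {X : Type*} (T : X → X) (f : ℕ → ℝ) {N : ℕ}
    (β : Fin N → Set X) (x : X) : ℝ≥0∞ :=
  limsup (fun n : ℕ => (minAIC U T β x n : ℝ≥0∞) / ENNReal.ofReal (f n)) atTop

/-- If `α` refines `β` then `K^f(x,T,β) ≤ K^f(x,T,α)`. -/
theorem stmt14 {X : Type*} [MetricSpace X] (T : X → X) (hT : Continuous T)
    (U : List Bool →. ℕ) (hU : Partrec U)
    (huniv : ∀ C : List Bool →. ℕ, Partrec C →
      ∃ c : ℕ, ∀ x : ℕ, kol U x ≤ kol C x + (c : ℕ∞))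
    (f : ℕ → ℝ) (hf : Monotone f) (hf' : Tendsto f atTop atTop)
    {N M : ℕ} (α : Fin N → Set X) (β : Fin M → Set X)
    (hαopen : ∀ i, IsOpen (α i)) (hβopen : ∀ j, IsOpen (β j))
    (hαcov : ∀ x : X, ∃ i, x ∈ α i) (hβcov : ∀ x : X, ∃ j, x ∈ β j)
    (href : ∀ i : Fin N, ∃ j : Fin M, α i ⊆ β j) (x : X) :
    KfCov U T f β x ≤ KfCov U T f α x := by
  classical
  -- the refinement map
  set r : Fin N → Fin M := fun i => (href i).choose with hr_def
  have hr : ∀ i, α i ⊆ β (r i) := fun i => (href i).choose_spec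
  -- r is primitive recursive
  have hrprim : Primrec r := by
    apply Primrec.fin_val_iff.1
    have h1 : Primrec (fun i : Fin N =>
        (List.ofFn (fun j : Fin N => ((r j : ℕ)))).getD (i : ℕ) 0) :=
      (Primrec.list_getD 0).comp (Primrec.const _) Primrec.fin_val
    apply h1.of_eq
    intro i
    rw [List.getD_eq_getElem _ _ (by simp [i.isLt])]
    simp
  -- the transformation on codes
  set g : ℕ → ℕ := fun m =>
    Encodable.encode ((((Encodable.decode m : Option (List (Fin N)))).getD []).map r)
      with hg_def
  have hg : Primrec g :=
    Primrec.encode.comp (Primrec.list_map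
      (Primrec.option_getD.comp Primrec.decode (Primrec.const []))
      (hrprim.comp Primrec.snd))
  set C : List Bool →. ℕ := fun p => (U p).map g with hC_def
  have hC : Partrec C := hU.map (hg.to_comp.comp Computable.snd)
  obtain ⟨c, hc⟩ := huniv C hC
  have key1 : ∀ m, kol C (g m) ≤ kol U m := by
    intro m
    apply sInf_le_sInf
    rintro n ⟨p, hp, hm⟩
    exact ⟨p, hp, Part.mem_map g hm⟩
  have key : ∀ m, kol U (g m) ≤ kol U m + (c : ℕ∞) :=
    fun m => (hc (g m)).trans (add_le_add (key1 m) le_rfl)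
  -- the minAIC comparison
  have keymin : ∀ n, minAIC U T β x n ≤ minAIC U T α x n + (c : ℕ∞) := by
    intro n
    have hω₀ : (fun k => (hαcov (T^[k] x)).choose) ∈ phi T α x :=
      fun k => (hαcov (T^[k] x)).choose_spec
    have hmin : minAIC U T α x n =
        sInf ((fun ω : ℕ → Fin N =>
          kol U (Encodable.encode (List.ofFn fun i : Fin n => ω i))) '' (phi T α x)) := by
      rw [minAIC]; exact sInf_image.symm
    have hS : ((fun ω : ℕ → Fin N =>
        kol U (Encodable.encode (List.ofFn fun i : Fin n => ω i))) '' (phi T α x)).Nonempty :=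
      ⟨_, ⟨_, hω₀, rfl⟩⟩
    obtain ⟨ω₀, hmem, heq⟩ := csInf_mem hS
    have hmemβ : (fun k => r (ω₀ k)) ∈ phi T β x := fun k => hr _ (hmem k)
    have step1 : minAIC U T β x n ≤
        kol U (Encodable.encode (List.ofFn fun i : Fin n => r (ω₀ i))) :=
      iInf_le_of_le (fun k => r (ω₀ k)) (iInf_le_of_le hmemβ le_rfl)
    have hgl : Encodable.encode (List.ofFn fun i : Fin n => r (ω₀ i)) =
        g (Encodable.encode (List.ofFn fun i : Fin n => ω₀ i)) := by
      simp [hg_def, Encodable.encodek, List.map_ofFn]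
      rfl
    calc minAIC U T β x n ≤
        kol U (Encodable.encode (List.ofFn fun i : Fin n => r (ω₀ i))) := step1
      _ = kol U (g (Encodable.encode (List.ofFn fun i : Fin n => ω₀ i))) := by rw [hgl]
      _ ≤ kol U (Encodable.encode (List.ofFn fun i : Fin n => ω₀ i)) + (c : ℕ∞) := key _
      _ = minAIC U T α x n + (c : ℕ∞) := by rw [hmin, ← heq]
  -- the limsup comparison
  rw [KfCov, KfCov]
  set F : ℕ → ℝ≥0∞ := fun n => ENNReal.ofReal (f n) with hF_def
  set u : ℕ → ℝ≥0∞ := fun n => (minAIC U T α x n : ℝ≥0∞) / F n with hu_def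
  set v : ℕ → ℝ≥0∞ := fun n => (minAIC U T β x n : ℝ≥0∞) / F n with hv_def
  have hvu : ∀ n, v n ≤ u n + (c : ℝ≥0∞) / F n := by
    intro n
    calc v n ≤ ((minAIC U T α x n + (c : ℕ∞) : ℕ∞) : ℝ≥0∞) / F n := by
          apply ENNReal.div_le_div_right
          exact_mod_cast keymin n
      _ = ((minAIC U T α x n : ℝ≥0∞) + (c : ℝ≥0∞)) / F n := by push_cast; ring_nf
      _ = u n + (c : ℝ≥0∞) / F n := ENNReal.add_div
  have hFtop : Tendsto F atTop (𝓝 ⊤) := ENNReal.tendsto_ofReal_atTop.comp hf'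
  have hcF : Tendsto (fun n => (c : ℝ≥0∞) / F n) atTop (𝓝 0) := by
    have : Tendsto (fun n => (F n)⁻¹) atTop (𝓝 0) := by
      simpa using (ENNReal.tendsto_inv_iff.2 hFtop)
    have h2 := ENNReal.Tendsto.const_mul this (Or.inr (by simp : (c : ℝ≥0∞) ≠ ⊤))
    simpa [div_eq_mul_inv, mul_zero] using h2
  apply ENNReal.le_of_forall_pos_le_add
  intro ε hε _
  have hev : ∀ᶠ n in atTop, v n ≤ u n + (ε : ℝ≥0∞) := by
    filter_upwards [hcF.eventually_lt_const (by exact_mod_cast hε : (0:ℝ≥0∞) < ε)] with n hn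
    exact (hvu n).trans (add_le_add le_rfl hn.le)
  calc limsup v atTop ≤ limsup (fun n => u n + (ε : ℝ≥0∞)) atTop :=
        limsup_le_limsup hev
    _ = limsup u atTop + (ε : ℝ≥0∞) := by
        apply limsup_add_const atTop u (ε : ℝ≥0∞)
        · exact ⟨⊤, Filter.Eventually.of_forall fun _ => le_top⟩
        · exact isCobounded_le_of_bot
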